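/- arXiv:2103.16999 — 8 statements merged into one kernel-verified Lean document; each statement's English description precedes it below -/
import Mathlib

section
/- Let A ∈ ℝ^{N×N}, let R_j, P_j, P̃_j be matrices with R_j P_j = I on each local space and Σ_j P̃_j R_j = I, and set A_j := R_j A P_j (assumed invertible). Then the RAS iteration u^n = u^{n-1} + Σ_j P̃_j A_j^{-1} R_j (f − A u^{n-1}) is identical to the iteration u^n = Σ_j P̃_j A_j^{-1} R_j (f − A(I − P_j R_j) u^{n-1}). -/
/-- RAS iteration in residual-correction form is identical to the
boundary-condition form. -/
theorem ras_two_forms {N m : ℕ} {d : Fin m → ℕ}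
    (A : Matrix (Fin N) (Fin N) ℝ)
    (R : ∀ j : Fin m, Matrix (Fin (d j)) (Fin N) ℝ)
    (P : ∀ j : Fin m, Matrix (Fin N) (Fin (d j)) ℝ)
    (Pt : ∀ j : Fin m, Matrix (Fin N) (Fin (d j)) ℝ)
    (f : Fin N → ℝ)
    (hRP : ∀ j, R j * P j = 1)
    (hPU : ∑ j, Pt j * R j = 1)
    (hinv : ∀ j, IsUnit (R j * A * P j))
    (u : Fin N → ℝ) :
    u + ∑ j, (Pt j).mulVec ((R j * A * P j)⁻¹.mulVec ((R j).mulVec (f - A.mulVec u)))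
      = ∑ j, (Pt j).mulVec ((R j * A * P j)⁻¹.mulVec
          ((R j).mulVec (f - A.mulVec ((1 - P j * R j).mulVec u)))) := by
  have key : ∀ j, (Pt j).mulVec ((R j * A * P j)⁻¹.mulVec
      ((R j).mulVec (f - A.mulVec ((1 - P j * R j).mulVec u))))
      = (Pt j).mulVec ((R j * A * P j)⁻¹.mulVec ((R j).mulVec (f - A.mulVec u)))
        + (Pt j * R j).mulVec u := by
    intro j
    have h2 : f - A.mulVec ((1 - P j * R j).mulVec u)
        = (f - A.mulVec u) + A.mulVec ((P j * R j).mulVec u) := by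
      rw [Matrix.sub_mulVec, Matrix.one_mulVec, Matrix.mulVec_sub]; abel
    rw [h2, Matrix.mulVec_add, Matrix.mulVec_add, Matrix.mulVec_add]
    congr 1
    have h3 : (R j).mulVec (A.mulVec ((P j * R j).mulVec u))
        = (R j * A * P j).mulVec ((R j).mulVec u) := by
      rw [← Matrix.mulVec_mulVec, ← Matrix.mulVec_mulVec, ← Matrix.mulVec_mulVec]
    rw [h3, Matrix.mulVec_mulVec, Matrix.mulVec_mulVec, Matrix.mulVec_mulVec,
      Matrix.mul_assoc (Pt j), Matrix.nonsing_inv_mul _ ((Matrix.isUnit_iff_isUnit_det _).mp (hinv j)),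
      Matrix.mul_one]
  simp only [key]
  rw [Finset.sum_add_distrib]
  have hsum : ∑ j, (Pt j * R j).mulVec u = u := by
    have : (∑ j, Pt j * R j).mulVec u = ∑ j, (Pt j * R j).mulVec u := by
      ext i
      simp [Matrix.mulVec, dotProduct, Matrix.sum_apply, Finset.sum_mul]
      rw [Finset.sum_comm]
    rw [← this, hPU, Matrix.one_mulVec]
  rw [hsum]
  abel
end

section
/- Let M^{-1} := Σ_j P̃_j A_j^{-1} R_j be the RAS preconditioner and let R̄ : V → V̄, P̄ : V̄ → V satisfy R̄ P̄ = I and R̄ M^{-1} A = R̄ M^{-1} A P̄ R̄. Define G^RAS(u) = u + M^{-1}(f − A u) and G^SRAS(v) = R̄ G^RAS(P̄ v). If u^0 ∈ V, v^0 = R̄ u^0, u^n = G^RAS(u^{n-1}), and v^n = G^SRAS(v^{n-1}), then R̄ u^n = v^n for all n ≥ 1. -/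
/-- Equivalence between RAS and SRAS iterates on the substructure. -/
theorem ras_sras_equivalence {N Nb : ℕ}
    (A Mi : Matrix (Fin N) (Fin N) ℝ)
    (Rb : Matrix (Fin Nb) (Fin N) ℝ) (Pb : Matrix (Fin N) (Fin Nb) ℝ)
    (f : Fin N → ℝ)
    (hRP : Rb * Pb = 1)
    (hcompat : Rb * Mi * A = Rb * Mi * A * Pb * Rb)
    (u : ℕ → Fin N → ℝ) (v : ℕ → Fin Nb → ℝ)
    (hv0 : v 0 = Rb.mulVec (u 0))
    (hu : ∀ n, u (n + 1) = u n + Mi.mulVec (f - A.mulVec (u n)))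
    (hv : ∀ n, v (n + 1) =
      Rb.mulVec (Pb.mulVec (v n) + Mi.mulVec (f - A.mulVec (Pb.mulVec (v n))))) :
    ∀ n : ℕ, 1 ≤ n → Rb.mulVec (u n) = v n := by
  have key : ∀ x : Fin N → ℝ,
      Rb.mulVec (Mi.mulVec (A.mulVec x))
        = (Rb * Mi * A * Pb).mulVec (Rb.mulVec x) := by
    intro x
    rw [Matrix.mulVec_mulVec, Matrix.mulVec_mulVec, Matrix.mulVec_mulVec, ← hcompat]
  have main : ∀ n, Rb.mulVec (u n) = v n := by
    intro n
    induction n with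
    | zero => exact hv0.symm
    | succ n ih =>
      have hL : Rb.mulVec (u (n + 1))
          = v n + Rb.mulVec (Mi.mulVec f)
              - (Rb * Mi * A * Pb).mulVec (v n) := by
        rw [hu n, Matrix.mulVec_add, Matrix.mulVec_sub, Matrix.mulVec_sub, key, ih]
        abel
      have hR : v (n + 1)
          = v n + Rb.mulVec (Mi.mulVec f)
              - (Rb * Mi * A * Pb).mulVec (v n) := by
        have h1 : Rb.mulVec (Pb.mulVec (v n)) = v n := by
          rw [Matrix.mulVec_mulVec, hRP, Matrix.one_mulVec]
        rw [hv n, Matrix.mulVec_add, Matrix.mulVec_sub, Matrix.mulVec_sub, key, h1]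
        abel
      rw [hL, hR]
  intro n _
  exact main n
end

section
/- Assume R̄ P̄ = I and R̄ M^{-1} A = R̄ M^{-1} A P̄ R̄. With u^0 ∈ ℝ^N, v^0 = R̄ u^0, r^0 = M^{-1}(f − A u^0), r̄^0 = R̄ M^{-1}(f − A P̄ v^0), for every k ≥ 1 the affine substructured Krylov space v^0 + span{r̄^0, (R̄ M^{-1} A P̄) r̄^0, …, (R̄ M^{-1} A P̄)^{k-1} r̄^0} equals the image under R̄ of the affine volume Krylov space u^0 + span{r^0, (M^{-1}A) r^0, …, (M^{-1}A)^{k-1} r^0}. -/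
/-- The affine substructured Krylov space equals the image under `R̄` of the
affine volume Krylov space. -/
theorem krylov_space_restriction {N Nb : ℕ}
    (A Mi : Matrix (Fin N) (Fin N) ℝ)
    (Rb : Matrix (Fin Nb) (Fin N) ℝ) (Pb : Matrix (Fin N) (Fin Nb) ℝ)
    (f u0 : Fin N → ℝ) (v0 : Fin Nb → ℝ) (r0 : Fin N → ℝ) (rb0 : Fin Nb → ℝ)
    (hRP : Rb * Pb = 1)
    (hcompat : Rb * Mi * A = Rb * Mi * A * Pb * Rb)
    (hv0 : v0 = Rb.mulVec u0)
    (hr0 : r0 = Mi.mulVec (f - A.mulVec u0))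
    (hrb0 : rb0 = Rb.mulVec (Mi.mulVec (f - A.mulVec (Pb.mulVec v0)))) :
    ∀ k : ℕ, 1 ≤ k →
      (fun w => v0 + w) '' ((Submodule.span ℝ
          (Set.range fun i : Fin k => ((Rb * Mi * A * Pb) ^ (i : ℕ)).mulVec rb0) :
            Submodule ℝ (Fin Nb → ℝ)) : Set (Fin Nb → ℝ))
        = Rb.mulVec '' ((fun w => u0 + w) '' ((Submodule.span ℝ
            (Set.range fun i : Fin k => ((Mi * A) ^ (i : ℕ)).mulVec r0) :
              Submodule ℝ (Fin N → ℝ)) : Set (Fin N → ℝ))) := by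
  intro k hk
  -- rb0 = Rb.mulVec r0
  have hrb : rb0 = Rb.mulVec r0 := by
    subst hv0 hr0 hrb0
    simp only [Matrix.mulVec_sub, Matrix.mulVec_mulVec]
    simp only [← Matrix.mul_assoc]
    rw [← hcompat]
  -- matrix power identity
  have hpow : ∀ i : ℕ, (Rb * Mi * A * Pb) ^ i * Rb = Rb * (Mi * A) ^ i := by
    intro i
    induction i with
    | zero => simp
    | succ n ih =>
        have hBR : Rb * Mi * A * Pb * Rb = Rb * (Mi * A) := by
          rw [← hcompat, Matrix.mul_assoc]
        calc (Rb * Mi * A * Pb) ^ (n + 1) * Rb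
            = (Rb * Mi * A * Pb) ^ n * (Rb * Mi * A * Pb * Rb) := by
              rw [pow_succ, Matrix.mul_assoc]
          _ = (Rb * Mi * A * Pb) ^ n * Rb * (Mi * A) := by
              rw [hBR, ← Matrix.mul_assoc]
          _ = Rb * ((Mi * A) ^ n * (Mi * A)) := by rw [ih, Matrix.mul_assoc]
          _ = Rb * (Mi * A) ^ (n + 1) := by rw [← pow_succ]
  have hvec : ∀ i : ℕ, ((Rb * Mi * A * Pb) ^ i).mulVec rb0
      = Rb.mulVec (((Mi * A) ^ i).mulVec r0) := by
    intro i
    rw [hrb, Matrix.mulVec_mulVec, Matrix.mulVec_mulVec, hpow]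
  have hspan : (Submodule.span ℝ
      (Set.range fun i : Fin k => ((Rb * Mi * A * Pb) ^ (i : ℕ)).mulVec rb0))
      = Submodule.map Rb.mulVecLin (Submodule.span ℝ
      (Set.range fun i : Fin k => ((Mi * A) ^ (i : ℕ)).mulVec r0)) := by
    rw [← Submodule.span_image, ← Set.range_comp]
    refine congrArg _ (congrArg _ (funext fun i => ?_))
    show ((Rb * Mi * A * Pb) ^ (i : ℕ)).mulVec rb0
        = Rb.mulVecLin (((Mi * A) ^ (i : ℕ)).mulVec r0)
    rw [Matrix.mulVecLin_apply, hvec]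
  rw [hspan, Submodule.map_coe, Set.image_image, Set.image_image]
  apply Set.image_congr'
  intro x
  simp [Matrix.mulVecLin_apply, Matrix.mulVec_add, hv0]
end

section
/- Let G_j : ℝ^N → ℝ^{N_j} be solution operators, P̃_j prolongations, and R̄, P̄ substructure restriction/prolongation with R̄ P̄ = I. Assume R̄ Σ_j P̃_j G_j(u) = R̄ Σ_j P̃_j G_j(P̄ R̄ u) for all u. Define Ḡ_j(v) := R̄ P̃_j G_j(P̄ v). If u^0 ∈ ℝ^N, v^0 = R̄ u^0, u^n = Σ_j P̃_j G_j(u^{n-1}), and v^n = Σ_j Ḡ_j(v^{n-1}), then R̄ u^n = v^n for all n ≥ 1. -/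
/-- Equivalence between nonlinear RAS and nonlinear SRAS iterates. -/
theorem nonlinear_ras_sras_equivalence {N Nb m : ℕ} {d : Fin m → ℕ}
    (G : ∀ j : Fin m, (Fin N → ℝ) → (Fin (d j) → ℝ))
    (Pt : ∀ j : Fin m, Matrix (Fin N) (Fin (d j)) ℝ)
    (Rb : Matrix (Fin Nb) (Fin N) ℝ) (Pb : Matrix (Fin N) (Fin Nb) ℝ)
    (hRP : Rb * Pb = 1)
    (hcompat : ∀ u, Rb.mulVec (∑ j, (Pt j).mulVec (G j u))
      = Rb.mulVec (∑ j, (Pt j).mulVec (G j (Pb.mulVec (Rb.mulVec u)))))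
    (u : ℕ → Fin N → ℝ) (v : ℕ → Fin Nb → ℝ)
    (hv0 : v 0 = Rb.mulVec (u 0))
    (hu : ∀ n, u (n + 1) = ∑ j, (Pt j).mulVec (G j (u n)))
    (hv : ∀ n, v (n + 1) = ∑ j, Rb.mulVec ((Pt j).mulVec (G j (Pb.mulVec (v n))))) :
    ∀ n : ℕ, 1 ≤ n → Rb.mulVec (u n) = v n := by
  have key : ∀ n : ℕ, Rb.mulVec (u n) = v n := by
    intro n
    induction n with
    | zero => exact hv0.symm
    | succ n ih =>
      rw [hu, hv, ← ih, hcompat (u n)]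
      rw [show Rb.mulVec (∑ j, (Pt j).mulVec (G j (Pb.mulVec (Rb.mulVec (u n)))))
        = ∑ j, Rb.mulVec ((Pt j).mulVec (G j (Pb.mulVec (Rb.mulVec (u n))))) from
        map_sum Rb.mulVecLin _ _]
  exact fun n _ => key n
end

section
/- Let F : ℝ^N → ℝ^N be differentiable with invertible Jacobians, and R̄, P̄ linear with R̄ P̄ = I. Assume R̄ F(u) = R̄ F(P̄ R̄ u) for all u, and that J_F(u) and J_{F̄}(R̄ u) are invertible where F̄(v) := R̄ F(P̄ v). Then R̄ (J_F(u))^{-1} = (J_{F̄}(R̄ u))^{-1} R̄ for every u. -/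
/-- Restriction commutes with inverse Jacobians:
`R̄ (J_F(u))⁻¹ = (J_F̄(R̄ u))⁻¹ R̄`. -/
theorem inverse_jacobian_restriction {N Nb : ℕ}
    (F : (Fin N → ℝ) → (Fin N → ℝ))
    (JF : (Fin N → ℝ) → Matrix (Fin N) (Fin N) ℝ)
    (JFb : (Fin Nb → ℝ) → Matrix (Fin Nb) (Fin Nb) ℝ)
    (Rb : Matrix (Fin Nb) (Fin N) ℝ) (Pb : Matrix (Fin N) (Fin Nb) ℝ)
    (hRP : Rb * Pb = 1)
    (hJF : ∀ u, HasFDerivAt F (LinearMap.toContinuousLinearMap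
      (Matrix.mulVecLin (JF u))) u)
    (hJFb : ∀ v, HasFDerivAt (fun w => Rb.mulVec (F (Pb.mulVec w)))
      (LinearMap.toContinuousLinearMap (Matrix.mulVecLin (JFb v))) v)
    (hcompat : ∀ u, Rb.mulVec (F u) = Rb.mulVec (F (Pb.mulVec (Rb.mulVec u))))
    (hinvF : ∀ u, IsUnit (JF u))
    (hinvFb : ∀ u, IsUnit (JFb (Rb.mulVec u))) :
    ∀ u, Rb * (JF u)⁻¹ = (JFb (Rb.mulVec u))⁻¹ * Rb := by
  intro u
  set L : (Fin N → ℝ) →L[ℝ] (Fin Nb → ℝ) :=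
    LinearMap.toContinuousLinearMap (Matrix.mulVecLin Rb) with hL
  -- derivative of u ↦ Rb.mulVec (F u)
  have h1 : HasFDerivAt (fun x => Rb.mulVec (F x))
      (L.comp (LinearMap.toContinuousLinearMap (Matrix.mulVecLin (JF u)))) u :=
    (L.hasFDerivAt).comp u (hJF u)
  have h2 : HasFDerivAt (fun x => Rb.mulVec (F (Pb.mulVec (Rb.mulVec x))))
      ((LinearMap.toContinuousLinearMap (Matrix.mulVecLin (JFb (Rb.mulVec u)))).comp L) u :=
    (hJFb (Rb.mulVec u)).comp u (L.hasFDerivAt)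
  have heq : HasFDerivAt (fun x => Rb.mulVec (F x))
      ((LinearMap.toContinuousLinearMap (Matrix.mulVecLin (JFb (Rb.mulVec u)))).comp L) u := by
    have : (fun x => Rb.mulVec (F x)) = fun x => Rb.mulVec (F (Pb.mulVec (Rb.mulVec x))) :=
      funext hcompat
    rw [this]; exact h2
  have hder := h1.unique heq
  -- convert to matrix equality
  have hmat : Rb * JF u = JFb (Rb.mulVec u) * Rb := by
    apply Matrix.toLin'.injective
    rw [Matrix.toLin'_apply', Matrix.toLin'_apply', Matrix.mulVecLin_mul, Matrix.mulVecLin_mul]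
    refine LinearMap.ext fun x => ?_
    have := congrArg (fun (T : (Fin N → ℝ) →L[ℝ] (Fin Nb → ℝ)) => T x) hder
    simpa [hL, Matrix.mulVec_mulVec] using this
  have hF := hinvF u
  have hFb := hinvFb u
  have h1' := Matrix.mul_nonsing_inv _ ((Matrix.isUnit_iff_isUnit_det _).mp hF)
  have h2' := Matrix.nonsing_inv_mul _ ((Matrix.isUnit_iff_isUnit_det _).mp hFb)
  calc Rb * (JF u)⁻¹ = (JFb (Rb.mulVec u))⁻¹ * (JFb (Rb.mulVec u) * Rb) * (JF u)⁻¹ := by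
        rw [← Matrix.mul_assoc, h2', Matrix.one_mul]
    _ = (JFb (Rb.mulVec u))⁻¹ * (Rb * JF u) * (JF u)⁻¹ := by rw [hmat]
    _ = (JFb (Rb.mulVec u))⁻¹ * Rb := by
        rw [Matrix.mul_assoc, Matrix.mul_assoc, h1', Matrix.mul_one]
end

section
/- Let F : ℝ^N → ℝ^N be differentiable, R̄, P̄ linear with R̄ P̄ = I, and assume R̄ F(u) = F̄(R̄ u) for all u where F̄(v) = R̄ F(P̄ v), with all relevant Jacobians invertible. If u^0 ∈ ℝ^N, v^0 = R̄ u^0, and the Newton sequences are u^n = u^{n-1} − (J_F(u^{n-1}))^{-1} F(u^{n-1}) and v^n = v^{n-1} − (J_{F̄}(v^{n-1}))^{-1} F̄(v^{n-1}), then R̄ u^n = v^n for every n ≥ 1 (equivalence of RASPEN and SRASPEN iterates on the substructure). -/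
/-- Equivalence of RASPEN and SRASPEN Newton iterates on the substructure. -/
theorem raspen_sraspen_equivalence {N Nb : ℕ}
    (F : (Fin N → ℝ) → (Fin N → ℝ))
    (JF : (Fin N → ℝ) → Matrix (Fin N) (Fin N) ℝ)
    (JFb : (Fin Nb → ℝ) → Matrix (Fin Nb) (Fin Nb) ℝ)
    (Rb : Matrix (Fin Nb) (Fin N) ℝ) (Pb : Matrix (Fin N) (Fin Nb) ℝ)
    (hRP : Rb * Pb = 1)
    (hJF : ∀ u, HasFDerivAt F (LinearMap.toContinuousLinearMap
      (Matrix.mulVecLin (JF u))) u)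
    (hJFb : ∀ v, HasFDerivAt (fun w => Rb.mulVec (F (Pb.mulVec w)))
      (LinearMap.toContinuousLinearMap (Matrix.mulVecLin (JFb v))) v)
    (hcompat : ∀ u, Rb.mulVec (F u) = Rb.mulVec (F (Pb.mulVec (Rb.mulVec u))))
    (u : ℕ → Fin N → ℝ) (v : ℕ → Fin Nb → ℝ)
    (hv0 : v 0 = Rb.mulVec (u 0))
    (hinvF : ∀ n, IsUnit (JF (u n)))
    (hinvFb : ∀ n, IsUnit (JFb (v n)))
    (hu : ∀ n, u (n + 1) = u n - (JF (u n))⁻¹.mulVec (F (u n)))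
    (hv : ∀ n, v (n + 1) = v n - (JFb (v n))⁻¹.mulVec
      (Rb.mulVec (F (Pb.mulVec (v n))))) :
    ∀ n : ℕ, 1 ≤ n → Rb.mulVec (u n) = v n := by
  have key : ∀ n : ℕ, Rb.mulVec (u n) = v n := by
    intro n
    induction n with
    | zero => exact hv0.symm
    | succ n ih =>
      set A := JF (u n) with hA
      set B := JFb (v n) with hB
      -- derivative of x ↦ Rb (F x) computed two ways
      have hRbClm : ∀ x : Fin N → ℝ,
          HasFDerivAt (fun y : Fin N → ℝ => Rb.mulVec y)
            (LinearMap.toContinuousLinearMap (Matrix.mulVecLin Rb)) x := by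
        intro x
        exact (LinearMap.toContinuousLinearMap (Matrix.mulVecLin Rb)).hasFDerivAt
      have h1 : HasFDerivAt (fun x => Rb.mulVec (F x))
          (LinearMap.toContinuousLinearMap (Matrix.mulVecLin (Rb * A))) (u n) := by
        have := (hRbClm (F (u n))).comp (u n) (hJF (u n))
        have heq : LinearMap.toContinuousLinearMap (Matrix.mulVecLin (Rb * A)) =
            (LinearMap.toContinuousLinearMap (Matrix.mulVecLin Rb)).comp
              (LinearMap.toContinuousLinearMap (Matrix.mulVecLin A)) := by
          ext x i
          simp [Matrix.mulVec_mulVec]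
        rw [heq]
        exact this
      have h2 : HasFDerivAt (fun x => Rb.mulVec (F x))
          (LinearMap.toContinuousLinearMap
            (Matrix.mulVecLin (JFb (Rb.mulVec (u n)) * Rb))) (u n) := by
        have hc := (hJFb (Rb.mulVec (u n))).comp (u n) (hRbClm (u n))
        have hfun : ((fun w => Rb.mulVec (F (Pb.mulVec w))) ∘
            fun y : Fin N → ℝ => Rb.mulVec y) = fun x => Rb.mulVec (F x) := by
          funext x
          exact (hcompat x).symm
        rw [hfun] at hc
        have heq : LinearMap.toContinuousLinearMap
            (Matrix.mulVecLin (JFb (Rb.mulVec (u n)) * Rb)) =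
            (LinearMap.toContinuousLinearMap (Matrix.mulVecLin (JFb (Rb.mulVec (u n))))).comp
              (LinearMap.toContinuousLinearMap (Matrix.mulVecLin Rb)) := by
          ext x i
          simp [Matrix.mulVec_mulVec]
        rw [heq]
        exact hc
      have hmat : Rb * A = JFb (Rb.mulVec (u n)) * Rb := by
        have huniq := h1.unique h2
        ext i j
        have := congrFun (congrArg (fun L => L (Pi.single j 1))
          (congrArg (fun (L : (Fin N → ℝ) →L[ℝ] (Fin Nb → ℝ)) => (L : (Fin N → ℝ) → Fin Nb → ℝ)) huniq)) i
        simpa [Matrix.mulVec_single, Matrix.mul_apply, Matrix.mulVec, dotProduct] using this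
      rw [ih] at hmat
      -- swap inverses
      have hAdet : IsUnit A.det := (Matrix.isUnit_iff_isUnit_det A).mp (hinvF n)
      have hBdet : IsUnit B.det := (Matrix.isUnit_iff_isUnit_det B).mp (hinvFb n)
      have hswap : Rb * A⁻¹ = B⁻¹ * Rb := by
        calc Rb * A⁻¹ = (B⁻¹ * B) * (Rb * A⁻¹) := by
              rw [Matrix.nonsing_inv_mul B hBdet, Matrix.one_mul]
          _ = B⁻¹ * ((B * Rb) * A⁻¹) := by simp only [Matrix.mul_assoc]
          _ = B⁻¹ * ((Rb * A) * A⁻¹) := by rw [hmat]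
          _ = B⁻¹ * (Rb * (A * A⁻¹)) := by simp only [Matrix.mul_assoc]
          _ = B⁻¹ * Rb := by rw [Matrix.mul_nonsing_inv A hAdet, Matrix.mul_one]
      -- conclude
      rw [hu n, hv n, Matrix.mulVec_sub, ih, Matrix.mulVec_mulVec, hswap,
        ← Matrix.mulVec_mulVec, ← ih, ← hcompat (u n), ih]
  intro n _
  exact key n
end

section
/- Let G_j be the implicit solution operators of nonlinear RAS for a differentiable F, i.e., R_j F(P_j G_j(u) + (I − P_j R_j) u) = 0, and suppose each G_j is differentiable with R_j J(u^{(j)}) P_j invertible, where u^{(j)} := P_j G_j(u) + (I − P_j R_j) u and J = J_F. Then dG_j/du (u) = R_j − (R_j J(u^{(j)}) P_j)^{-1} R_j J(u^{(j)}). -/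
/-- Implicit differentiation of the local solution operator:
`dG_j/du(u) = R_j − (R_j J(u⁽ʲ⁾) P_j)⁻¹ R_j J(u⁽ʲ⁾)`. -/
theorem local_solution_operator_derivative {N Nj : ℕ}
    (F : (Fin N → ℝ) → (Fin N → ℝ))
    (J : (Fin N → ℝ) → Matrix (Fin N) (Fin N) ℝ)
    (R : Matrix (Fin Nj) (Fin N) ℝ) (P : Matrix (Fin N) (Fin Nj) ℝ)
    (G : (Fin N → ℝ) → (Fin Nj → ℝ))
    (dG : (Fin N → ℝ) → Matrix (Fin Nj) (Fin N) ℝ)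
    (hRP : R * P = 1)
    (hF : ∀ x, HasFDerivAt F (LinearMap.toContinuousLinearMap
      (Matrix.mulVecLin (J x))) x)
    (hG : ∀ u, HasFDerivAt G (LinearMap.toContinuousLinearMap
      (Matrix.mulVecLin (dG u))) u)
    (himp : ∀ u, R.mulVec (F (P.mulVec (G u) + (1 - P * R).mulVec u)) = 0)
    (u : Fin N → ℝ)
    (hinv : IsUnit (R * J (P.mulVec (G u) + (1 - P * R).mulVec u) * P)) :
    dG u = R - (R * J (P.mulVec (G u) + (1 - P * R).mulVec u) * P)⁻¹
      * (R * J (P.mulVec (G u) + (1 - P * R).mulVec u)) := by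
  set x : Fin N → ℝ := P.mulVec (G u) + (1 - P * R).mulVec u with hx
  -- derivative of inner map
  have h1 : HasFDerivAt (fun u => P.mulVec (G u) + (1 - P * R).mulVec u)
      (LinearMap.toContinuousLinearMap
        (Matrix.mulVecLin (P * dG u + (1 - P * R)))) u := by
    have ha := ((Matrix.mulVecLin P).toContinuousLinearMap.hasFDerivAt
      (x := G u)).comp u (hG u)
    have hb := (Matrix.mulVecLin (1 - P * R)).toContinuousLinearMap.hasFDerivAt (x := u)
    have hc := ha.add hb
    refine hc.congr_fderiv ?_
    ext v i
    simp [Matrix.mulVecLin_add, Matrix.mulVecLin_mul]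
  have h2 := ((hF x).comp u h1)
  have h3 := ((Matrix.mulVecLin R).toContinuousLinearMap.hasFDerivAt
      (x := F x)).comp u h2
  have h0 : HasFDerivAt (fun u => R.mulVec (F (P.mulVec (G u) + (1 - P * R).mulVec u)))
      (0 : (Fin N → ℝ) →L[ℝ] (Fin Nj → ℝ)) u := by
    have : (fun u => R.mulVec (F (P.mulVec (G u) + (1 - P * R).mulVec u)))
        = fun _ => (0 : Fin Nj → ℝ) := funext himp
    rw [this]
    exact hasFDerivAt_const _ _
  have heq := h3.unique h0
  set A := R * J x with hA
  have key : ∀ v, (R * (J x * (P * dG u + (1 - P * R)))).mulVec v = 0 := by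
    intro v
    have hv := ContinuousLinearMap.ext_iff.mp heq v
    simpa [Matrix.mulVec_mulVec, Matrix.mul_add, Matrix.add_mulVec, Matrix.mul_sub, Matrix.sub_mulVec] using hv
  have hmat : A * (P * dG u + (1 - P * R)) = 0 := by
    rw [hA, Matrix.mul_assoc]
    ext i j
    have := congrFun (key (Pi.single j 1)) i
    simpa [Matrix.mulVec_single] using this
  have hsolve : A * P * dG u = A * P * R - A := by
    rw [Matrix.mul_add, Matrix.mul_sub, Matrix.mul_one, ← Matrix.mul_assoc,
      ← Matrix.mul_assoc] at hmat
    have := eq_neg_of_add_eq_zero_left hmat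
    rw [neg_sub] at this
    exact this
  have hinv1 : (A * P)⁻¹ * (A * P) = 1 :=
    Matrix.nonsing_inv_mul _ ((Matrix.isUnit_iff_isUnit_det _).mp hinv)
  calc dG u = ((A * P)⁻¹ * (A * P)) * dG u := by rw [hinv1]; simp
    _ = (A * P)⁻¹ * (A * P * dG u) := by rw [Matrix.mul_assoc]
    _ = (A * P)⁻¹ * (A * P * R - A) := by rw [hsolve]
    _ = R - (A * P)⁻¹ * A := by
        rw [Matrix.mul_sub, ← Matrix.mul_assoc, hinv1]; simp
end

section
/- Let F(u) := u − Σ_j P̃_j G_j(u) with differentiable G_j satisfying dG_j/du(u) = R_j − (R_j J(u^{(j)}) P_j)^{-1} R_j J(u^{(j)}), and assume Σ_j P̃_j R_j = I. Then the Jacobian of the RASPEN function is J_F(u) = Σ_j P̃_j (R_j J(u^{(j)}) P_j)^{-1} R_j J(u^{(j)}). -/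
private lemma mulVecLin_sub' {n p : ℕ} (A B : Matrix (Fin n) (Fin p) ℝ) :
    (A - B).mulVecLin = A.mulVecLin - B.mulVecLin :=
  LinearMap.ext fun v => Matrix.sub_mulVec A B v

private lemma mulVecLin_sum' {n p m : ℕ} (s : Finset (Fin m))
    (M : Fin m → Matrix (Fin n) (Fin p) ℝ) :
    (∑ j ∈ s, M j).mulVecLin = ∑ j ∈ s, (M j).mulVecLin := by
  induction s using Finset.induction with
  | empty => simp
  | insert a s h ih => simp [Finset.sum_insert h, ih]

/-- Jacobian of the RASPEN function:
`J_F(u) = Σ_j P̃_j (R_j J(u⁽ʲ⁾) P_j)⁻¹ R_j J(u⁽ʲ⁾)`. -/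
theorem raspen_jacobian {N m : ℕ} {d : Fin m → ℕ}
    (J : (Fin N → ℝ) → Matrix (Fin N) (Fin N) ℝ)
    (R : ∀ j : Fin m, Matrix (Fin (d j)) (Fin N) ℝ)
    (P : ∀ j : Fin m, Matrix (Fin N) (Fin (d j)) ℝ)
    (Pt : ∀ j : Fin m, Matrix (Fin N) (Fin (d j)) ℝ)
    (G : ∀ j : Fin m, (Fin N → ℝ) → (Fin (d j) → ℝ))
    (Jj : Fin m → Matrix (Fin N) (Fin N) ℝ)
    (u : Fin N → ℝ)
    (hJj : ∀ j, Jj j = J ((P j).mulVec (G j u) + (1 - P j * R j).mulVec u))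
    (hPU : ∑ j, Pt j * R j = 1)
    (hinv : ∀ j, IsUnit (R j * Jj j * P j))
    (hdG : ∀ j, HasFDerivAt (G j) (LinearMap.toContinuousLinearMap
      (Matrix.mulVecLin (R j - (R j * Jj j * P j)⁻¹ * (R j * Jj j)))) u) :
    HasFDerivAt (fun w => w - ∑ j, (Pt j).mulVec (G j w))
      (LinearMap.toContinuousLinearMap (Matrix.mulVecLin
        (∑ j, Pt j * ((R j * Jj j * P j)⁻¹ * (R j * Jj j))))) u := by
  have hterm : ∀ j : Fin m, HasFDerivAt (fun w => (Pt j).mulVec (G j w))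
      (LinearMap.toContinuousLinearMap
        (Matrix.mulVecLin (Pt j * (R j - (R j * Jj j * P j)⁻¹ * (R j * Jj j))))) u := by
    intro j
    have h := ((Matrix.mulVecLin (Pt j)).toContinuousLinearMap.hasFDerivAt).comp u (hdG j)
    refine h.congr_fderiv ?_
    apply ContinuousLinearMap.coe_injective
    ext v
    simp [Matrix.mulVecLin_mul, Matrix.mulVec_sub, Matrix.mulVec_mulVec]
  have hsum : HasFDerivAt (fun w => ∑ j, (Pt j).mulVec (G j w))
      (∑ j, LinearMap.toContinuousLinearMap
        (Matrix.mulVecLin (Pt j * (R j - (R j * Jj j * P j)⁻¹ * (R j * Jj j))))) u :=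
    HasFDerivAt.fun_sum (fun j _ => hterm j)
  have hF := (hasFDerivAt_id u).sub hsum
  refine hF.congr_fderiv ?_
  have hmat : (∑ j, Pt j * ((R j * Jj j * P j)⁻¹ * (R j * Jj j)))
      = 1 - ∑ j, Pt j * (R j - (R j * Jj j * P j)⁻¹ * (R j * Jj j)) := by
    simp only [Matrix.mul_sub, Finset.sum_sub_distrib, hPU]
    abel
  rw [hmat, mulVecLin_sub' , mulVecLin_sum', Matrix.mulVecLin_one, ]
  apply ContinuousLinearMap.coe_injective
  simp only [LinearMap.coe_toContinuousLinearMap, ContinuousLinearMap.coe_sub,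
    ContinuousLinearMap.coe_sum, ContinuousLinearMap.coe_id]
end
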